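/- arXiv:2312.04924 — 2 statements merged into one kernel-verified Lean document; each statement's English description precedes it below -/
import Mathlib

section
/- Let D_1,...,D_t be i.i.d. random variables uniformly distributed on {1,...,n}. Then for q > 0, P( Σ_{j=1}^t √(12/(n²−1)) (D_j − (n+1)/2) ≥ √(2qt log n) ) ≤ n^{−q + (√6/3) √(q³ log(n)/t)}. -/
open MeasureTheory ProbabilityTheory


lemma fact_bd (k : ℕ) : 2 * 3 ^ k ≤ Nat.factorial (k + 2) := by
  induction k with
  | zero => simp [Nat.factorial]
  | succ k ih =>
    calc 2 * 3 ^ (k+1) = 3 * (2 * 3 ^ k) := by ring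
    _ ≤ 3 * Nat.factorial (k+2) := by omega
    _ ≤ (k+3) * Nat.factorial (k+2) := by apply Nat.mul_le_mul_right; omega
    _ = Nat.factorial (k+3) := rfl

set_option maxHeartbeats 1000000 in
lemma exp_bnd (M lam x : ℝ) (hlam : 0 ≤ lam) (hx : |x| ≤ M) (hM : lam * M < 3) :
    Real.exp (lam * x) ≤ 1 + lam * x + x ^ 2 * (lam ^ 2 / 2 / (1 - lam * M / 3)) := by
  have hM0 : 0 ≤ M := le_trans (abs_nonneg x) hx
  set r : ℝ := lam * M / 3 with hr
  have hr0 : 0 ≤ r := by positivity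
  have hr1 : r < 1 := by rw [hr]; linarith
  set y := lam * x with hy
  have hs : Summable fun k : ℕ => y ^ k / (Nat.factorial k : ℝ) :=
    Real.summable_pow_div_factorial y
  have hexp : Real.exp y = ∑' k : ℕ, y ^ k / (Nat.factorial k : ℝ) := by
    rw [Real.exp_eq_exp_ℝ, NormedSpace.exp_eq_tsum_div]
  have hs1 : Summable fun k : ℕ => y ^ (k+1) / (Nat.factorial (k+1) : ℝ) :=
    (summable_nat_add_iff 1).2 hs
  have hs2 : Summable fun k : ℕ => y ^ (k+2) / (Nat.factorial (k+2) : ℝ) :=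
    (summable_nat_add_iff 2).2 hs
  have hsplit : Real.exp y = 1 + y + ∑' k : ℕ, y ^ (k+2) / (Nat.factorial (k+2) : ℝ) := by
    rw [hexp, Summable.tsum_eq_zero_add hs, Summable.tsum_eq_zero_add hs1]
    simp [Nat.factorial]
    ring
  -- termwise bound
  have hterm : ∀ k : ℕ, y ^ (k+2) / (Nat.factorial (k+2) : ℝ) ≤ x ^ 2 * (lam ^ 2 / 2) * r ^ k := by
    intro k
    have h1 : y ^ (k+2) ≤ |y| ^ (k+2) := by
      calc y ^ (k+2) ≤ |y ^ (k+2)| := le_abs_self _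
      _ = |y| ^ (k+2) := by rw [abs_pow]
    have h2 : |y| ^ (k+2) = lam ^ (k+2) * (|x| ^ 2 * |x| ^ k) := by
      rw [hy, abs_mul, abs_of_nonneg hlam, mul_pow]; ring
    have h3 : |x| ^ 2 * |x| ^ k ≤ x ^ 2 * M ^ k := by
      rw [sq_abs]
      exact mul_le_mul_of_nonneg_left (pow_le_pow_left₀ (abs_nonneg x) hx k) (sq_nonneg x)
    have h4 : |y| ^ (k+2) ≤ lam ^ (k+2) * (x ^ 2 * M ^ k) := by
      rw [h2]; exact mul_le_mul_of_nonneg_left h3 (by positivity)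
    have h5 : (2 * 3 ^ k : ℝ) ≤ (Nat.factorial (k+2) : ℝ) := by
      exact_mod_cast fact_bd k
    have h6 : (0:ℝ) < 2 * 3 ^ k := by positivity
    calc y ^ (k+2) / (Nat.factorial (k+2) : ℝ)
        ≤ lam ^ (k+2) * (x ^ 2 * M ^ k) / (2 * 3 ^ k) := by
          apply div_le_div₀ (by positivity) (le_trans h1 h4) h6 h5
    _ = x ^ 2 * (lam ^ 2 / 2) * ((lam * M / 3) ^ k) := by
          rw [div_pow, mul_pow, pow_add]
          field_simp
  have hgs : Summable fun k : ℕ => x ^ 2 * (lam ^ 2 / 2) * r ^ k :=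
    (summable_geometric_of_lt_one hr0 hr1).mul_left _
  have htail : ∑' k : ℕ, y ^ (k+2) / (Nat.factorial (k+2) : ℝ)
      ≤ x ^ 2 * (lam ^ 2 / 2) * (1 - r)⁻¹ := by
    calc ∑' k : ℕ, y ^ (k+2) / (Nat.factorial (k+2) : ℝ)
        ≤ ∑' k : ℕ, x ^ 2 * (lam ^ 2 / 2) * r ^ k := Summable.tsum_le_tsum hterm hs2 hgs
    _ = x ^ 2 * (lam ^ 2 / 2) * (1 - r)⁻¹ := by
        rw [tsum_mul_left, tsum_geometric_of_lt_one hr0 hr1]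
  rw [hsplit]
  have : x ^ 2 * (lam ^ 2 / 2 / (1 - r)) = x ^ 2 * (lam ^ 2 / 2) * (1 - r)⁻¹ := by
    rw [div_eq_mul_inv (lam ^ 2 / 2)]; ring
  linarith [htail, this]


lemma sum_Icc_id (n : ℕ) : ∑ i ∈ Finset.Icc 1 n, (i : ℝ) = n * (n + 1) / 2 := by
  induction n with
  | zero => simp
  | succ n ih =>
    rw [Finset.sum_Icc_succ_top (by omega : 1 ≤ n + 1), ih]
    push_cast; ring

lemma sum_Icc_sq (n : ℕ) : ∑ i ∈ Finset.Icc 1 n, (i : ℝ) ^ 2 = n * (n + 1) * (2 * n + 1) / 6 := by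
  induction n with
  | zero => simp
  | succ n ih =>
    rw [Finset.sum_Icc_succ_top (by omega : 1 ≤ n + 1), ih]
    push_cast; ring

lemma integral_unif {Ω : Type*} [MeasurableSpace Ω] (μ : Measure Ω) [IsProbabilityMeasure μ]
    (n : ℕ) (hn : 2 ≤ n) (Dj : Ω → ℝ) (hm : Measurable Dj)
    (hd : Measure.map Dj μ =
      Measure.map (fun i : ℕ => (i : ℝ))
        (PMF.uniformOfFinset (Finset.Icc 1 n)
          (Finset.nonempty_Icc.mpr (le_trans one_le_two hn))).toMeasure)
    (f : ℝ → ℝ) (hf : Measurable f) (C : ℝ) (hC : ∀ i : ℕ, i ∈ Finset.Icc 1 n → |f i| ≤ C) :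
    ∫ ω, f (Dj ω) ∂μ = ∑ i ∈ Finset.Icc 1 n, (n : ℝ)⁻¹ * f i := by
  set p := PMF.uniformOfFinset (Finset.Icc 1 n)
      (Finset.nonempty_Icc.mpr (le_trans one_le_two hn)) with hp
  have hcoe : Measurable (fun i : ℕ => (i : ℝ)) := measurable_from_top
  -- a.e. membership in Icc
  have hae : ∀ᵐ i ∂p.toMeasure, i ∈ Finset.Icc 1 n := by
    rw [MeasureTheory.ae_iff]
    rw [PMF.toMeasure_apply_eq_zero_iff (hs := MeasurableSet.of_discrete)]
    rw [PMF.support_uniformOfFinset]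
    rw [Set.disjoint_left]
    intro a ha ha'
    exact ha' (Finset.mem_coe.mp ha)
  have hint : Integrable (fun i : ℕ => f i) p.toMeasure := by
    refine Integrable.mono' (integrable_const C) ((hf.comp hcoe).aestronglyMeasurable) ?_
    filter_upwards [hae] with i hi
    rw [Real.norm_eq_abs]
    exact hC i hi
  have hcard : (Finset.Icc 1 n).card = n := by
    rw [Nat.card_Icc]; omega
  calc ∫ ω, f (Dj ω) ∂μ
      = ∫ x, f x ∂(Measure.map Dj μ) :=
        (integral_map hm.aemeasurable hf.aestronglyMeasurable).symm
    _ = ∫ x, f x ∂(Measure.map (fun i : ℕ => (i : ℝ)) p.toMeasure) := by rw [hd]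
    _ = ∫ i, f i ∂p.toMeasure := integral_map hcoe.aemeasurable hf.aestronglyMeasurable
    _ = ∑' i : ℕ, (p i).toReal • f i := PMF.integral_eq_tsum p _ hint
    _ = ∑ i ∈ Finset.Icc 1 n, (p i).toReal • f i := by
        refine tsum_eq_sum ?_
        intro i hi
        rw [hp, PMF.uniformOfFinset_apply, if_neg hi]
        simp
    _ = ∑ i ∈ Finset.Icc 1 n, (n : ℝ)⁻¹ * f i := by
        refine Finset.sum_congr rfl ?_
        intro i hi
        rw [hp, PMF.uniformOfFinset_apply, if_pos hi, hcard, smul_eq_mul,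
          ENNReal.toReal_inv, ENNReal.toReal_natCast]

-- a.e. membership of D j in [1, n]
lemma Dae {Ω : Type*} [MeasurableSpace Ω] (μ : Measure Ω) [IsProbabilityMeasure μ]
    (n : ℕ) (hn : 2 ≤ n) (Dj : Ω → ℝ) (hm : Measurable Dj)
    (hd : Measure.map Dj μ =
      Measure.map (fun i : ℕ => (i : ℝ))
        (PMF.uniformOfFinset (Finset.Icc 1 n)
          (Finset.nonempty_Icc.mpr (le_trans one_le_two hn))).toMeasure) :
    ∀ᵐ ω ∂μ, Dj ω ∈ Set.Icc (1 : ℝ) n := by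
  set p := PMF.uniformOfFinset (Finset.Icc 1 n)
      (Finset.nonempty_Icc.mpr (le_trans one_le_two hn)) with hp
  have hcoe : Measurable (fun i : ℕ => (i : ℝ)) := measurable_from_top
  rw [MeasureTheory.ae_iff]
  have hms : MeasurableSet {x : ℝ | ¬ x ∈ Set.Icc (1:ℝ) n} :=
    (measurableSet_Icc).compl
  have h1 : μ {ω | ¬ Dj ω ∈ Set.Icc (1:ℝ) n}
      = (Measure.map Dj μ) {x : ℝ | ¬ x ∈ Set.Icc (1:ℝ) n} := by
    rw [Measure.map_apply hm hms]; rfl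
  rw [h1, hd, Measure.map_apply hcoe hms,
    PMF.toMeasure_apply_eq_zero_iff (hs := MeasurableSet.of_discrete), hp,
    PMF.support_uniformOfFinset, Set.disjoint_left]
  intro a ha ha'
  simp only [Set.mem_preimage, Set.mem_setOf_eq, Set.mem_Icc, not_and, not_le] at ha'
  rw [Finset.mem_coe, Finset.mem_Icc] at ha
  have := ha' (by exact_mod_cast ha.1)
  have : (a:ℝ) ≤ n := by exact_mod_cast ha.2
  linarith

lemma mgf_bnd {Ω : Type*} [MeasurableSpace Ω] (μ : Measure Ω) [IsProbabilityMeasure μ]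
    (n : ℕ) (hn : 2 ≤ n) (Dj : Ω → ℝ) (hm : Measurable Dj)
    (hd : Measure.map Dj μ =
      Measure.map (fun i : ℕ => (i : ℝ))
        (PMF.uniformOfFinset (Finset.Icc 1 n)
          (Finset.nonempty_Icc.mpr (le_trans one_le_two hn))).toMeasure)
    (lam : ℝ) (hlam : 0 ≤ lam) (hlam3 : lam * Real.sqrt 3 < 3) :
    mgf (fun ω => Real.sqrt (12 / ((n : ℝ) ^ 2 - 1)) * (Dj ω - ((n : ℝ) + 1) / 2)) μ lam
      ≤ Real.exp (lam ^ 2 / 2 / (1 - lam * Real.sqrt 3 / 3)) := by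
  have hn1 : (2:ℝ) ≤ (n:ℝ) := by exact_mod_cast hn
  have hn2 : (0:ℝ) < (n:ℝ) ^ 2 - 1 := by nlinarith
  set c0 : ℝ := Real.sqrt (12 / ((n : ℝ) ^ 2 - 1)) with hc0def
  set m : ℝ := ((n : ℝ) + 1) / 2 with hmdef
  have hc0 : 0 ≤ c0 := Real.sqrt_nonneg _
  have hc0sq : c0 ^ 2 = 12 / ((n : ℝ) ^ 2 - 1) := Real.sq_sqrt (by positivity)
  set cc : ℝ := lam ^ 2 / 2 / (1 - lam * Real.sqrt 3 / 3) with hccdef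
  have hden : 0 < 1 - lam * Real.sqrt 3 / 3 := by linarith
  have hcc : 0 ≤ cc := by positivity
  -- bound |c0 * (x - m)| ≤ √3 on [1, n]
  have hbx : ∀ x ∈ Set.Icc (1:ℝ) (n:ℝ), |c0 * (x - m)| ≤ Real.sqrt 3 := by
    intro x hx
    obtain ⟨hx1, hx2⟩ := hx
    have habs : |x - m| ≤ ((n:ℝ) - 1) / 2 := by
      rw [abs_le]; constructor <;> (rw [hmdef] at *) <;> [linarith; linarith]
    have h1 : |c0 * (x - m)| = c0 * |x - m| := by
      rw [abs_mul, abs_of_nonneg hc0]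
    have h2 : c0 * |x - m| ≤ c0 * (((n:ℝ) - 1) / 2) :=
      mul_le_mul_of_nonneg_left habs hc0
    have h3 : c0 * (((n:ℝ) - 1) / 2) ≤ Real.sqrt 3 := by
      apply Real.le_sqrt_of_sq_le
      rw [mul_pow, hc0sq, div_mul_eq_mul_div, div_le_iff₀ hn2]
      nlinarith
    calc |c0 * (x - m)| = c0 * |x - m| := h1
      _ ≤ _ := le_trans h2 h3
  set g : ℝ → ℝ := fun x => 1 + lam * (c0 * (x - m)) + (c0 * (x - m)) ^ 2 * cc with hgdef
  have hgmeas : Measurable g := by fun_prop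
  have hDae := Dae μ n hn Dj hm hd
  have hsq3 : Real.sqrt 3 ^ 2 = 3 := Real.sq_sqrt (by norm_num)
  have hsq3' : 0 ≤ Real.sqrt 3 := Real.sqrt_nonneg 3
  -- uniform bound for g on [1,n]
  have hgb : ∀ x ∈ Set.Icc (1:ℝ) (n:ℝ), |g x| ≤ 1 + lam * Real.sqrt 3 + 3 * cc := by
    intro x hx
    have hb := hbx x hx
    have hb1 : lam * (c0 * (x - m)) ≤ lam * Real.sqrt 3 :=
      mul_le_mul_of_nonneg_left (le_trans (le_abs_self _) hb) hlam
    have hb1' : -(lam * Real.sqrt 3) ≤ lam * (c0 * (x - m)) := by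
      have h := mul_le_mul_of_nonneg_left (abs_le.1 hb).1 hlam
      have h2 : lam * -Real.sqrt 3 = -(lam * Real.sqrt 3) := by ring
      linarith [h, h2.le, h2.ge]
    have hb2 : (c0 * (x - m)) ^ 2 ≤ 3 := by
      calc (c0 * (x - m)) ^ 2 = |c0 * (x - m)| ^ 2 := (sq_abs _).symm
        _ ≤ Real.sqrt 3 ^ 2 := by apply pow_le_pow_left₀ (abs_nonneg _) hb
        _ = 3 := hsq3
    have hb3 : 0 ≤ (c0 * (x - m)) ^ 2 := sq_nonneg _
    simp only [hgdef]
    rw [abs_le]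
    have hb4 : (c0 * (x - m)) ^ 2 * cc ≤ 3 * cc := mul_le_mul_of_nonneg_right hb2 hcc
    have hb5 : 0 ≤ (c0 * (x - m)) ^ 2 * cc := mul_nonneg hb3 hcc
    constructor
    · linarith
    · linarith
  -- pointwise a.e. bound
  have hpt : ∀ᵐ ω ∂μ, Real.exp (lam * (c0 * (Dj ω - m))) ≤ g (Dj ω) := by
    filter_upwards [hDae] with ω hω
    exact exp_bnd (Real.sqrt 3) lam _ hlam (hbx _ hω) hlam3
  have hmeasX : Measurable fun ω => c0 * (Dj ω - m) := ((hm.sub measurable_const).const_mul c0)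
  have hexpint : Integrable (fun ω => Real.exp (lam * (c0 * (Dj ω - m)))) μ := by
    refine Integrable.mono' (integrable_const (Real.exp (lam * Real.sqrt 3)))
      ((hmeasX.const_mul lam).exp.aestronglyMeasurable) ?_
    filter_upwards [hDae] with ω hω
    rw [Real.norm_eq_abs, Real.abs_exp]
    apply Real.exp_le_exp.2
    exact mul_le_mul_of_nonneg_left (le_trans (le_abs_self _) (hbx _ hω)) hlam
  have hgint : Integrable (fun ω => g (Dj ω)) μ := by
    refine Integrable.mono' (integrable_const (1 + lam * Real.sqrt 3 + 3 * cc))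
      ((hgmeas.comp hm).aestronglyMeasurable) ?_
    filter_upwards [hDae] with ω hω
    rw [Real.norm_eq_abs]
    exact hgb _ hω
  have hmono := integral_mono_ae hexpint hgint hpt
  -- value of ∫ g (Dj)
  have hcast : ∀ i : ℕ, i ∈ Finset.Icc 1 n → ((i:ℝ) ∈ Set.Icc (1:ℝ) (n:ℝ)) := by
    intro i hi
    rw [Finset.mem_Icc] at hi
    constructor
    · exact_mod_cast hi.1
    · exact_mod_cast hi.2
  have hval : ∫ ω, g (Dj ω) ∂μ = 1 + cc := by
    rw [integral_unif μ n hn Dj hm hd g hgmeas (1 + lam * Real.sqrt 3 + 3 * cc)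
      (fun i hi => hgb _ (hcast i hi))]
    have hn0 : (n:ℝ) ≠ 0 := by positivity
    have hexp : ∀ i ∈ Finset.Icc 1 n, (n:ℝ)⁻¹ * g i
        = (n:ℝ)⁻¹ * (1 - lam * c0 * m + cc * c0 ^ 2 * m ^ 2)
          + ((n:ℝ)⁻¹ * (lam * c0 - 2 * cc * c0 ^ 2 * m)) * (i:ℝ)
          + ((n:ℝ)⁻¹ * (cc * c0 ^ 2)) * (i:ℝ) ^ 2 := by
      intro i _
      rw [hgdef]; ring
    rw [Finset.sum_congr rfl hexp]
    rw [Finset.sum_add_distrib, Finset.sum_add_distrib, ← Finset.mul_sum, ← Finset.mul_sum,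
      ← Finset.mul_sum, Finset.sum_const, sum_Icc_id, sum_Icc_sq, Nat.card_Icc]
    have hcard : (n + 1 - 1 : ℕ) = n := by omega
    rw [hcard, nsmul_eq_mul, hc0sq, hmdef]
    field_simp
    ring
  calc mgf (fun ω => c0 * (Dj ω - m)) μ lam
      = ∫ ω, Real.exp (lam * (c0 * (Dj ω - m))) ∂μ := rfl
    _ ≤ ∫ ω, g (Dj ω) ∂μ := hmono
    _ = 1 + cc := hval
    _ ≤ Real.exp cc := by linarith [Real.add_one_le_exp cc]


lemma hbx_ax (n : ℕ) (hn : 2 ≤ n) : ∀ x ∈ Set.Icc (1:ℝ) (n:ℝ),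
    |Real.sqrt (12 / ((n : ℝ) ^ 2 - 1)) * (x - ((n : ℝ) + 1) / 2)| ≤ Real.sqrt 3 := by
  have hn1 : (2:ℝ) ≤ (n:ℝ) := by exact_mod_cast hn
  have hn2 : (0:ℝ) < (n:ℝ) ^ 2 - 1 := by nlinarith
  set c0 : ℝ := Real.sqrt (12 / ((n : ℝ) ^ 2 - 1)) with hc0def
  set m : ℝ := ((n : ℝ) + 1) / 2 with hmdef
  have hc0 : 0 ≤ c0 := Real.sqrt_nonneg _
  have hc0sq : c0 ^ 2 = 12 / ((n : ℝ) ^ 2 - 1) := Real.sq_sqrt (by positivity)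
  intro x hx
  obtain ⟨hx1, hx2⟩ := hx
  have habs : |x - m| ≤ ((n:ℝ) - 1) / 2 := by
    rw [abs_le]; constructor <;> (rw [hmdef] at *) <;> [linarith; linarith]
  have h1 : |c0 * (x - m)| = c0 * |x - m| := by
    rw [abs_mul, abs_of_nonneg hc0]
  have h2 : c0 * |x - m| ≤ c0 * (((n:ℝ) - 1) / 2) :=
    mul_le_mul_of_nonneg_left habs hc0
  have h3 : c0 * (((n:ℝ) - 1) / 2) ≤ Real.sqrt 3 := by
    apply Real.le_sqrt_of_sq_le
    rw [mul_pow, hc0sq, div_mul_eq_mul_div, div_le_iff₀ hn2]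
    nlinarith
  calc |c0 * (x - m)| = c0 * |x - m| := h1
    _ ≤ _ := le_trans h2 h3

lemma expint {Ω : Type*} [MeasurableSpace Ω] (μ : Measure Ω) [IsProbabilityMeasure μ]
    (n : ℕ) (hn : 2 ≤ n) (Dj : Ω → ℝ) (hm : Measurable Dj)
    (hd : Measure.map Dj μ =
      Measure.map (fun i : ℕ => (i : ℝ))
        (PMF.uniformOfFinset (Finset.Icc 1 n)
          (Finset.nonempty_Icc.mpr (le_trans one_le_two hn))).toMeasure)
    (lam : ℝ) (hlam : 0 ≤ lam) :
    Integrable (fun ω => Real.exp (lam *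
      (Real.sqrt (12 / ((n : ℝ) ^ 2 - 1)) * (Dj ω - ((n : ℝ) + 1) / 2)))) μ := by
  have hmeasX : Measurable fun ω =>
      Real.sqrt (12 / ((n : ℝ) ^ 2 - 1)) * (Dj ω - ((n : ℝ) + 1) / 2) :=
    (hm.sub measurable_const).const_mul _
  refine Integrable.mono' (integrable_const (Real.exp (lam * Real.sqrt 3)))
    ((hmeasX.const_mul lam).exp.aestronglyMeasurable) ?_
  filter_upwards [Dae μ n hn Dj hm hd] with ω hω
  rw [Real.norm_eq_abs, Real.abs_exp]
  apply Real.exp_le_exp.2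
  exact mul_le_mul_of_nonneg_left (le_trans (le_abs_self _) (hbx_ax n hn _ hω)) hlam

/-- Bernstein-type tail bound for sums of standardized i.i.d. discrete uniforms on `{1,...,n}`:
for `q > 0`,
`P( Σ_j √(12/(n²−1)) (D_j − (n+1)/2) ≥ √(2 q t log n) ) ≤ n^{−q + (√6/3)√(q³ log(n)/t)}`. -/
theorem stmt_5 {Ω : Type*} [MeasurableSpace Ω] (μ : Measure Ω) [IsProbabilityMeasure μ]
    (n t : ℕ) (hn : 2 ≤ n) (ht : 1 ≤ t) (q : ℝ) (hq : 0 < q)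
    (D : Fin t → Ω → ℝ) (hmeas : ∀ j, Measurable (D j))
    (hdist : ∀ j, Measure.map (D j) μ =
      Measure.map (fun i : ℕ => (i : ℝ))
        (PMF.uniformOfFinset (Finset.Icc 1 n)
          (Finset.nonempty_Icc.mpr (le_trans one_le_two hn))).toMeasure)
    (hindep : iIndepFun D μ) :
    (μ {ω | Real.sqrt (2 * q * t * Real.log n) ≤
        ∑ j, Real.sqrt (12 / ((n : ℝ) ^ 2 - 1)) * (D j ω - ((n : ℝ) + 1) / 2)}).toReal ≤
      (n : ℝ) ^ (-q + Real.sqrt 6 / 3 * Real.sqrt (q ^ 3 * Real.log n / t)) := by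
  have ht0 : (0:ℝ) < (t:ℝ) := by exact_mod_cast ht
  have hn1 : (1:ℝ) < (n:ℝ) := by exact_mod_cast (by omega : 1 < n)
  set L : ℝ := Real.log n with hLdef
  have hL : 0 < L := Real.log_pos hn1
  set ζ : ℝ := Real.sqrt (2 * q * t * L) with hzdef
  have hz0 : 0 ≤ ζ := Real.sqrt_nonneg _
  have hz2 : ζ ^ 2 = 2 * q * t * L := Real.sq_sqrt (by positivity)
  set s3 : ℝ := Real.sqrt 3 with hs3def
  have hs3 : 0 < s3 := Real.sqrt_pos.2 (by norm_num)
  have hs3sq : s3 ^ 2 = 3 := Real.sq_sqrt (by norm_num)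
  set A : ℝ := (t:ℝ) + ζ / s3 with hAdef
  have hA : 0 < A := by positivity
  set lam : ℝ := ζ / A with hlamdef
  have hlam0 : 0 ≤ lam := by positivity
  have hss : s3 * s3 = 3 := by nlinarith [hs3sq]
  have key : ζ * s3 = 3 * (ζ / s3) := by
    rw [mul_comm 3, div_mul_eq_mul_div, eq_div_iff hs3.ne', mul_assoc, hss, mul_comm]
  have hlam3 : lam * s3 < 3 := by
    rw [hlamdef, div_mul_eq_mul_div, div_lt_iff₀ hA, key, hAdef]
    have h0 : 0 ≤ ζ / s3 := div_nonneg hz0 hs3.le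
    linarith [ht0]
  set cc : ℝ := lam ^ 2 / 2 / (1 - lam * s3 / 3) with hccdef
  -- the random variables
  set c0 : ℝ := Real.sqrt (12 / ((n : ℝ) ^ 2 - 1)) with hc0def
  set m : ℝ := ((n : ℝ) + 1) / 2 with hmdef
  set X : Fin t → Ω → ℝ := fun j ω => c0 * (D j ω - m) with hXdef
  have hXmeas : ∀ j, Measurable (X j) := fun j => ((hmeas j).sub measurable_const).const_mul c0
  have hXindep : iIndepFun X μ :=
    hindep.comp (fun _ x => c0 * (x - m))
      (fun _ => (measurable_id.sub measurable_const).const_mul c0)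
  have hXint : ∀ j : Fin t, Integrable (fun ω => Real.exp (lam * X j ω)) μ := fun j =>
    expint μ n hn (D j) (hmeas j) (hdist j) lam hlam0
  have hSint : Integrable (fun ω => Real.exp (lam * (∑ j, X j) ω)) μ :=
    hXindep.integrable_exp_mul_sum hXmeas (fun j _ => hXint j)
  -- Chernoff
  have hch := measure_ge_le_exp_mul_mgf (X := ∑ j, X j) (μ := μ) ζ hlam0 hSint
  have hset : {ω | ζ ≤ ∑ j, c0 * (D j ω - m)} = {ω | ζ ≤ (∑ j, X j) ω} := by
    ext ω; simp [hXdef, Finset.sum_apply]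
  have hprod : mgf (∑ j, X j) μ lam ≤ Real.exp cc ^ t := by
    rw [hXindep.mgf_sum hXmeas]
    calc ∏ j : Fin t, mgf (X j) μ lam ≤ ∏ _j : Fin t, Real.exp cc := by
          apply Finset.prod_le_prod (fun j _ => mgf_nonneg)
          exact fun j _ => mgf_bnd μ n hn (D j) (hmeas j) (hdist j) lam hlam0 hlam3
      _ = Real.exp cc ^ t := by rw [Finset.prod_const, Finset.card_univ, Fintype.card_fin]
  -- combine
  have hcomb : (μ {ω | ζ ≤ ∑ j, c0 * (D j ω - m)}).toReal
      ≤ Real.exp (-lam * ζ + t * cc) := by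
    rw [hset]
    calc (μ {ω | ζ ≤ (∑ j, X j) ω}).toReal
        ≤ Real.exp (-lam * ζ) * mgf (∑ j, X j) μ lam := hch
      _ ≤ Real.exp (-lam * ζ) * Real.exp cc ^ t :=
          mul_le_mul_of_nonneg_left hprod (Real.exp_nonneg _)
      _ = Real.exp (-lam * ζ + t * cc) := by
          rw [← Real.exp_nat_mul, ← Real.exp_add]
  -- arithmetic: the exponent bound
  have hAne : A ≠ 0 := hA.ne'
  have h1ml : 1 - lam * s3 / 3 = t / A := by
    rw [hlamdef, eq_div_iff hAne]
    have expand : (1 - ζ / A * s3 / 3) * A = A - ζ * s3 / 3 := by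
      field_simp
    rw [expand, hAdef]
    have h0 : 0 ≤ ζ / s3 := div_nonneg hz0 hs3.le
    linarith [key]
  have hclose : -lam * ζ + t * cc = -(ζ ^ 2) / (2 * A) := by
    rw [hccdef, h1ml, hlamdef]
    field_simp
    ring
  have hle_tA : (t:ℝ) ≤ A := by
    rw [hAdef]
    have h0 : 0 ≤ ζ / s3 := div_nonneg hz0 hs3.le
    linarith
  have hseq : Real.sqrt 6 / 3 * Real.sqrt (q ^ 3 * L / t) = q * ζ / (s3 * t) := by
    have e1 : q * ζ = Real.sqrt (q ^ 2 * (2 * q * t * L)) := by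
      rw [Real.sqrt_mul (sq_nonneg q), Real.sqrt_sq hq.le, hzdef]
    have e2 : s3 * t = Real.sqrt (3 * (t:ℝ) ^ 2) := by
      rw [Real.sqrt_mul (by norm_num : (0:ℝ) ≤ 3), Real.sqrt_sq ht0.le, hs3def]
    have e3 : q * ζ / (s3 * t) = Real.sqrt (q ^ 2 * (2 * q * t * L) / (3 * (t:ℝ) ^ 2)) := by
      rw [e1, e2, ← Real.sqrt_div (by positivity)]
    have e4 : Real.sqrt 6 / 3 * Real.sqrt (q ^ 3 * L / t)
        = Real.sqrt (6 * (q ^ 3 * L / t) / 9) := by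
      rw [show (3:ℝ) = Real.sqrt 9 by
            rw [show (9:ℝ) = 3 ^ 2 by norm_num, Real.sqrt_sq]; norm_num,
        div_mul_eq_mul_div, ← Real.sqrt_mul (by norm_num : (0:ℝ) ≤ 6),
        ← Real.sqrt_div (by positivity)]
    rw [e3, e4]
    congr 1
    field_simp
    ring
  have hexpo : -(ζ ^ 2) / (2 * A) ≤ L * (-q + q * ζ / (s3 * t)) := by
    have h8 : -(ζ ^ 2) / (2 * A) = -(q * t * L) / A := by
      rw [hz2]; field_simp; try ring
    have h6 : q * L - q * t * L / A = q * L * (ζ / s3) / A := by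
      rw [hAdef]; field_simp; try ring
    have h5 : q * L * (ζ / s3) / A ≤ q * L * (ζ / s3) / t := by
      gcongr
    have h7 : q * L * (ζ / s3) / t = L * (q * ζ / (s3 * t)) := by
      field_simp
    rw [h8, neg_div]
    linarith [h5, h6, h7]
  -- finish
  calc (μ {ω | ζ ≤ ∑ j, c0 * (D j ω - m)}).toReal
      ≤ Real.exp (-lam * ζ + t * cc) := hcomb
    _ ≤ Real.exp (L * (-q + Real.sqrt 6 / 3 * Real.sqrt (q ^ 3 * L / t))) := by
        rw [hclose, hseq]
        exact Real.exp_le_exp.2 hexpo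
    _ = (n : ℝ) ^ (-q + Real.sqrt 6 / 3 * Real.sqrt (q ^ 3 * L / t)) := by
        rw [Real.rpow_def_of_pos (by positivity : (0:ℝ) < (n:ℝ)), hLdef]
end

section
/- Let X ~ Uniform[−(2+c), 2+c] for some c ∈ (−1, 1], and let Y₁, Y₂ be i.i.d. Uniform[−1,1], independent of X. Then P(X > max{Y₁, Y₂}) = (5 + 3c)/(12 + 6c). In particular, E[F₀(X)²] does not converge along c = sin(n) as n → ∞. -/
open MeasureTheory ProbabilityTheory Filter

lemma sin_nat_not_tendsto (a : ℝ) :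
    ¬ Tendsto (fun n : ℕ => Real.sin n) atTop (nhds a) := by
  intro ha
  have hs1 : (0:ℝ) < Real.sin 1 :=
    Real.sin_pos_of_pos_of_lt_pi one_pos (by linarith [Real.pi_gt_three])
  have hc1 : Real.cos 1 < 1 := lt_of_le_of_lt Real.cos_one_le (by norm_num)
  set b : ℝ := (a - a * Real.cos 1) / Real.sin 1 with hb
  have hshift : Tendsto (fun n : ℕ => Real.sin ((n:ℝ) + 1)) atTop (nhds a) := by
    have h := ha.comp (tendsto_add_atTop_nat 1)
    have : (fun n : ℕ => Real.sin ((n : ℝ) + 1)) =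
        (fun n : ℕ => Real.sin n) ∘ (fun n => n + 1) := by
      funext n; simp [Function.comp]
    rwa [this]
  have hcos : Tendsto (fun n : ℕ => Real.cos n) atTop (nhds b) := by
    have h : ∀ n : ℕ, Real.cos (n:ℝ) =
        (Real.sin ((n:ℝ)+1) - Real.sin n * Real.cos 1) / Real.sin 1 := by
      intro n
      rw [Real.sin_add]
      field_simp
      ring
    simp only [h]
    exact (hshift.sub (ha.mul_const _)).div_const _
  have hcshift : Tendsto (fun n : ℕ => Real.cos ((n:ℝ) + 1)) atTop (nhds b) := by
    have h := hcos.comp (tendsto_add_atTop_nat 1)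
    have : (fun n : ℕ => Real.cos ((n : ℝ) + 1)) =
        (fun n : ℕ => Real.cos n) ∘ (fun n => n + 1) := by
      funext n; simp [Function.comp]
    rwa [this]
  have hcos2 : Tendsto (fun n : ℕ => Real.cos ((n:ℝ) + 1)) atTop
      (nhds (b * Real.cos 1 - a * Real.sin 1)) := by
    simp only [Real.cos_add]
    exact (hcos.mul_const _).sub (ha.mul_const _)
  have heq1 : b = b * Real.cos 1 - a * Real.sin 1 := tendsto_nhds_unique hcshift hcos2
  have heq2 : b * Real.sin 1 = a - a * Real.cos 1 := by
    rw [hb]; field_simp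
  have heq3 : a ^ 2 + b ^ 2 = 1 := by
    have h1 : Tendsto (fun n : ℕ => Real.sin n ^ 2 + Real.cos n ^ 2) atTop
        (nhds (a ^ 2 + b ^ 2)) := ((ha.pow 2).add (hcos.pow 2))
    have h2 : Tendsto (fun n : ℕ => Real.sin n ^ 2 + Real.cos n ^ 2) atTop (nhds 1) := by
      have : (fun n : ℕ => Real.sin n ^ 2 + Real.cos n ^ 2) = fun _ => (1:ℝ) := by
        funext n; exact Real.sin_sq_add_cos_sq _
      rw [this]; exact tendsto_const_nhds
    exact tendsto_nhds_unique h1 h2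
  have eA : b * (1 - Real.cos 1) = -(a * Real.sin 1) := by linear_combination heq1
  have eC : a * ((1 - Real.cos 1)^2 + Real.sin 1 ^ 2) = 0 := by
    linear_combination Real.sin 1 * eA - (1 - Real.cos 1) * heq2
  have h2c : (1 - Real.cos 1)^2 + Real.sin 1 ^ 2 = 2 - 2 * Real.cos 1 := by
    linear_combination Real.sin_sq_add_cos_sq 1
  rw [h2c] at eC
  have ha0 : a = 0 := by
    rcases mul_eq_zero.mp eC with h | h
    · exact h
    · linarith
  have hb0 : b = 0 := by
    rw [ha0] at heq2
    have := heq2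
    simp at this
    rcases this with h | h
    · exact h
    · exact absurd h hs1.ne'
  rw [ha0, hb0] at heq3
  norm_num at heq3

lemma part2 : ¬ ∃ L : ℝ, Tendsto (fun n : ℕ => (5 + 3 * Real.sin n) / (12 + 6 * Real.sin n))
    atTop (nhds L) := by
  rintro ⟨L, hL⟩
  set f : ℕ → ℝ := fun n => (5 + 3 * Real.sin n) / (12 + 6 * Real.sin n) with hf
  have hub : ∀ n : ℕ, f n ≤ 4/9 := by
    intro n
    have h1 : Real.sin n ≤ 1 := Real.sin_le_one _
    have h2 : (-1:ℝ) ≤ Real.sin n := Real.neg_one_le_sin _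
    rw [hf]
    rw [div_le_iff₀ (by linarith)]
    linarith
  have hL49 : L ≤ 4/9 := le_of_tendsto hL (Eventually.of_forall hub)
  have hden : 6 * L - 3 ≠ 0 := by intro h; nlinarith
  have hg : Tendsto (fun n => (5 - 12 * f n) / (6 * f n - 3)) atTop
      (nhds ((5 - 12 * L) / (6 * L - 3))) :=
    Tendsto.div (tendsto_const_nhds.sub (hL.const_mul 12))
      ((hL.const_mul 6).sub tendsto_const_nhds) hden
  have hkey : ∀ n : ℕ, (5 - 12 * f n) / (6 * f n - 3) = Real.sin n := by
    intro n
    have h2 : (-1:ℝ) ≤ Real.sin n := Real.neg_one_le_sin _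
    have hd : (12:ℝ) + 6 * Real.sin n ≠ 0 := by intro h; linarith [Real.neg_one_le_sin (n:ℝ)]
    have hden2 : 6 * f n - 3 = -6 / (12 + 6 * Real.sin n) := by
      rw [hf]; field_simp; ring
    have hnum : 5 - 12 * f n = -6 * Real.sin n / (12 + 6 * Real.sin n) := by
      rw [hf]; simp only []; rw [eq_div_iff hd, sub_mul, mul_assoc, div_mul_cancel₀ _ hd]; ring
    rw [hnum, hden2]
    rw [div_div_div_cancel_right₀]
    · field_simp
    · exact hd
  simp only [hkey] at hg
  exact sin_nat_not_tendsto _ hg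


theorem part1 {Ω : Type} [MeasurableSpace Ω] (μ : Measure Ω) [IsProbabilityMeasure μ]
    (c : ℝ) (hc1 : -1 < c) (hc2 : c ≤ 1)
    (X Y₁ Y₂ : Ω → ℝ) (hX : Measurable X) (hY₁ : Measurable Y₁) (hY₂ : Measurable Y₂)
    (huX : pdf.IsUniform X (Set.Icc (-(2 + c)) (2 + c)) μ)
    (huY₁ : pdf.IsUniform Y₁ (Set.Icc (-1 : ℝ) 1) μ)
    (huY₂ : pdf.IsUniform Y₂ (Set.Icc (-1 : ℝ) 1) μ)
    (hind : iIndepFun ![X, Y₁, Y₂] μ) :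
    (μ {ω | max (Y₁ ω) (Y₂ ω) < X ω}).toReal = (5 + 3 * c) / (12 + 6 * c) := by
  set a : ℝ := 2 + c with ha_def
  have ha : 1 < a := by rw [ha_def]; linarith
  set I : Set ℝ := Set.Icc (-a) a with hI_def
  set J : Set ℝ := Set.Icc (-1 : ℝ) 1 with hJ_def
  -- measures
  have hvolI : volume I = ENNReal.ofReal (2 * a) := by
    rw [hI_def, Real.volume_Icc]; congr 1; ring
  have hvolJ : volume J = ENNReal.ofReal 2 := by
    rw [hJ_def, Real.volume_Icc]; norm_num
  have hmapX : Measure.map X μ = volume[|I] := huX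
  have hmapY₁ : Measure.map Y₁ μ = volume[|J] := huY₁
  have hmapY₂ : Measure.map Y₂ μ = volume[|J] := huY₂
  haveI hpI : IsProbabilityMeasure (volume[|I]) :=
    cond_isProbabilityMeasure_of_finite
      (by rw [hvolI]; simp; linarith) (by rw [hvolI]; exact ENNReal.ofReal_ne_top)
  haveI hpJ : IsProbabilityMeasure (volume[|J]) :=
    cond_isProbabilityMeasure_of_finite
      (by rw [hvolJ]; simp) (by rw [hvolJ]; exact ENNReal.ofReal_ne_top)
  -- independence
  have hmeas : ∀ i, Measurable (![X, Y₁, Y₂] i) := by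
    intro i; fin_cases i <;> simpa
  have hpair : IndepFun Y₁ Y₂ μ := by
    have h := hind.indepFun (i := 1) (j := 2) (by decide)
    simpa using h
  have hIXp : IndepFun X (fun ω => (Y₁ ω, Y₂ ω)) μ := by
    have h := (hind.indepFun_prodMk hmeas 1 2 0 (by decide) (by decide)).symm
    simpa using h
  have h2 : Measure.map (fun ω => (Y₁ ω, Y₂ ω)) μ =
      (Measure.map Y₁ μ).prod (Measure.map Y₂ μ) :=
    (indepFun_iff_map_prod_eq_prod_map_map hY₁.aemeasurable hY₂.aemeasurable).mp hpair
  have h3 : Measure.map (fun ω => (X ω, (Y₁ ω, Y₂ ω))) μ =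
      (Measure.map X μ).prod (Measure.map (fun ω => (Y₁ ω, Y₂ ω)) μ) :=
    (indepFun_iff_map_prod_eq_prod_map_map hX.aemeasurable
      (hY₁.prodMk hY₂).aemeasurable).mp hIXp
  -- event as preimage
  have hTmeas : MeasurableSet {p : ℝ × ℝ × ℝ | max p.2.1 p.2.2 < p.1} :=
    measurableSet_lt (measurable_snd.fst.max measurable_snd.snd) measurable_fst
  have hev : μ {ω | max (Y₁ ω) (Y₂ ω) < X ω} =
      ((volume[|I]).prod ((volume[|J]).prod (volume[|J])))
        {p : ℝ × ℝ × ℝ | max p.2.1 p.2.2 < p.1} :=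
    calc μ {ω | max (Y₁ ω) (Y₂ ω) < X ω}
        = Measure.map (fun ω => (X ω, (Y₁ ω, Y₂ ω))) μ
            {p : ℝ × ℝ × ℝ | max p.2.1 p.2.2 < p.1} :=
          (Measure.map_apply (hX.prodMk (hY₁.prodMk hY₂)) hTmeas).symm
      _ = _ := by rw [h3, h2, hmapX, hmapY₁, hmapY₂]
  -- compute product measure via Fubini
  set r : ℝ → ℝ := fun x => min (max (x + 1) 0) 2 with hr_def
  have hr_nonneg : ∀ x, 0 ≤ r x := fun x => le_min (le_max_right _ _) (by norm_num)
  have hmeasJ : ∀ x : ℝ, volume (J ∩ Set.Iio x) = ENNReal.ofReal (r x) := by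
    intro x
    rcases le_or_gt x (-1) with h | h
    · have hempty : J ∩ Set.Iio x = ∅ := by
        ext y; simp only [hJ_def, Set.mem_inter_iff, Set.mem_Icc, Set.mem_Iio,
          Set.mem_empty_iff_false, iff_false]
        rintro ⟨⟨h1, _⟩, h3⟩; linarith
      rw [hempty]
      have : r x = 0 := by
        rw [hr_def]; simp only []
        rw [max_eq_right (by linarith : x + 1 ≤ 0)]
        norm_num
      rw [this]; simp
    · rcases le_or_gt x 1 with h' | h'
      · have hico : J ∩ Set.Iio x = Set.Ico (-1) x := by
          ext y; simp only [hJ_def, Set.mem_inter_iff, Set.mem_Icc, Set.mem_Iio, Set.mem_Ico]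
          constructor
          · rintro ⟨⟨h1, h2⟩, h3⟩; exact ⟨h1, h3⟩
          · rintro ⟨h1, h2⟩; exact ⟨⟨h1, by linarith⟩, h2⟩
        rw [hico, Real.volume_Ico]
        have : r x = x + 1 := by
          rw [hr_def]; simp only []
          rw [max_eq_left (by linarith : (0:ℝ) ≤ x + 1), min_eq_left (by linarith : x + 1 ≤ 2)]
        rw [this]; congr 1; ring
      · have hall : J ∩ Set.Iio x = J := by
          apply Set.inter_eq_left.mpr
          intro y hy
          simp only [hJ_def, Set.mem_Icc] at hy
          simp only [Set.mem_Iio]; linarith [hy.2]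
        rw [hall, hvolJ]
        have : r x = 2 := by
          rw [hr_def]; simp only []
          rw [max_eq_left (by linarith : (0:ℝ) ≤ x + 1), min_eq_right (by linarith : (2:ℝ) ≤ x + 1)]
        rw [this]
  have hsq : ∀ x : ℝ, (volume[|J]) (Set.Iio x) * (volume[|J]) (Set.Iio x)
      = ENNReal.ofReal (r x ^ 2 / 4) := by
    intro x
    rw [cond_apply (by exact measurableSet_Icc) volume (Set.Iio x), hmeasJ x, hvolJ]
    rw [← ENNReal.ofReal_inv_of_pos (by norm_num : (0:ℝ) < 2)]
    rw [← ENNReal.ofReal_mul (by norm_num : (0:ℝ) ≤ 2⁻¹)]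
    rw [← ENNReal.ofReal_mul (by positivity)]
    congr 1
    ring
  have hfubini : ((volume[|I]).prod ((volume[|J]).prod (volume[|J])))
        {p : ℝ × ℝ × ℝ | max p.2.1 p.2.2 < p.1}
      = ∫⁻ x, ENNReal.ofReal (r x ^ 2 / 4) ∂(volume[|I]) := by
    rw [Measure.prod_apply hTmeas]
    congr 1
    funext x
    have hpre : (Prod.mk x ⁻¹' {p : ℝ × ℝ × ℝ | max p.2.1 p.2.2 < p.1})
        = Set.Iio x ×ˢ Set.Iio x := by
      ext q
      simp [Set.mem_prod, max_lt_iff]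
    rw [hpre, Measure.prod_prod, hsq]
  -- the lintegral over the conditional measure
  have hg_cont : Continuous (fun x : ℝ => r x ^ 2 / 4) := by
    apply Continuous.div_const
    exact (((continuous_id.add continuous_const).max continuous_const).min
      continuous_const).pow 2
  have hlin : ∫⁻ x, ENNReal.ofReal (r x ^ 2 / 4) ∂(volume[|I])
      = (ENNReal.ofReal (2 * a))⁻¹ * ENNReal.ofReal (∫ x in I, r x ^ 2 / 4) := by
    rw [ProbabilityTheory.cond, lintegral_smul_measure, hvolI]
    congr 1
    rw [← ofReal_integral_eq_lintegral_ofReal]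
    · exact (hg_cont.integrableOn_Icc)
    · exact Filter.Eventually.of_forall fun x => by positivity
  -- compute the real integral
  have hIcc : ∫ x in I, r x ^ 2 / 4 = ∫ x in (-a)..a, r x ^ 2 / 4 := by
    rw [hI_def, integral_Icc_eq_integral_Ioc,
      ← intervalIntegral.integral_of_le (by linarith : -a ≤ a)]
  have hII : ∀ u v : ℝ, IntervalIntegrable (fun x => r x ^ 2 / 4) volume u v :=
    fun u v => hg_cont.intervalIntegrable u v
  have e1 : ∫ x in (-a)..(-1:ℝ), r x ^ 2 / 4 = 0 := by
    have heq : Set.EqOn (fun x => r x ^ 2 / 4) (fun _ => (0:ℝ)) (Set.uIcc (-a) (-1)) := by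
      intro x hx
      rw [Set.uIcc_of_le (by linarith : -a ≤ -1)] at hx
      have hx2 : x ≤ -1 := hx.2
      simp only [hr_def]
      rw [max_eq_right (by linarith : x + 1 ≤ 0)]
      norm_num
    rw [intervalIntegral.integral_congr heq]
    simp
  have e2 : ∫ x in (-1:ℝ)..1, r x ^ 2 / 4 = 2/3 := by
    have heq : Set.EqOn (fun x => r x ^ 2 / 4) (fun x => (x + 1) ^ 2 / 4)
        (Set.uIcc (-1:ℝ) 1) := by
      intro x hx
      rw [Set.uIcc_of_le (by norm_num : (-1:ℝ) ≤ 1)] at hx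
      simp only [hr_def]
      rw [max_eq_left (by linarith [hx.1] : (0:ℝ) ≤ x + 1),
        min_eq_left (by linarith [hx.2] : x + 1 ≤ 2)]
    rw [intervalIntegral.integral_congr heq]
    have hc := intervalIntegral.integral_comp_add_right (a := (-1:ℝ)) (b := 1)
      (fun y : ℝ => y ^ 2 / 4) 1
    norm_num at hc
    rw [intervalIntegral.integral_div]
    exact hc
  have e3 : ∫ x in (1:ℝ)..a, r x ^ 2 / 4 = a - 1 := by
    have heq : Set.EqOn (fun x => r x ^ 2 / 4) (fun _ => (1:ℝ)) (Set.uIcc (1:ℝ) a) := by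
      intro x hx
      rw [Set.uIcc_of_le (by linarith : (1:ℝ) ≤ a)] at hx
      simp only [hr_def]
      rw [max_eq_left (by linarith [hx.1] : (0:ℝ) ≤ x + 1),
        min_eq_right (by linarith [hx.1] : (2:ℝ) ≤ x + 1)]
      norm_num
    rw [intervalIntegral.integral_congr heq]
    simp
  have hadd1 := intervalIntegral.integral_add_adjacent_intervals
    (hII (-a) (-1)) (hII (-1) 1)
  have hadd2 := intervalIntegral.integral_add_adjacent_intervals
    (hII (-a) 1) (hII 1 a)
  have hintcalc : ∫ x in I, r x ^ 2 / 4 = a - 1/3 := by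
    rw [hIcc, ← hadd2, ← hadd1, e1, e2, e3]
    ring
  -- final assembly
  rw [hev, hfubini, hlin, hintcalc]
  rw [ENNReal.toReal_mul, ENNReal.toReal_inv,
    ENNReal.toReal_ofReal (by linarith : (0:ℝ) ≤ 2 * a),
    ENNReal.toReal_ofReal (by linarith : (0:ℝ) ≤ a - 1/3)]
  rw [ha_def]
  have hne : (2:ℝ) * (2 + c) ≠ 0 := by intro h; nlinarith
  have hne2 : (12:ℝ) + 6 * c ≠ 0 := by intro h; linarith
  have hne3 : (2:ℝ) + c ≠ 0 := by intro h; linarith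
  have hne4 : (12:ℝ) + c * 6 ≠ 0 := by intro h; linarith
  field_simp
  ring

/-- If `X ~ Uniform[−(2+c), 2+c]` with `c ∈ (−1, 1]` and `Y₁, Y₂` are i.i.d.
`Uniform[−1,1]`, all independent, then `P(X > max{Y₁, Y₂}) = (5+3c)/(12+6c)`.
In particular, the sequence `n ↦ (5+3 sin n)/(12+6 sin n)` (the value of
`E[F₀(X)²]` along `c = sin n`) does not converge. -/
theorem stmt_18 :
    (∀ {Ω : Type} [MeasurableSpace Ω] (μ : Measure Ω), ∀ [IsProbabilityMeasure μ],
      ∀ (c : ℝ), -1 < c → c ≤ 1 →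
      ∀ (X Y₁ Y₂ : Ω → ℝ), Measurable X → Measurable Y₁ → Measurable Y₂ →
      pdf.IsUniform X (Set.Icc (-(2 + c)) (2 + c)) μ →
      pdf.IsUniform Y₁ (Set.Icc (-1 : ℝ) 1) μ →
      pdf.IsUniform Y₂ (Set.Icc (-1 : ℝ) 1) μ →
      iIndepFun ![X, Y₁, Y₂] μ →
      (μ {ω | max (Y₁ ω) (Y₂ ω) < X ω}).toReal = (5 + 3 * c) / (12 + 6 * c)) ∧
    ¬ ∃ L : ℝ, Tendsto (fun n : ℕ => (5 + 3 * Real.sin n) / (12 + 6 * Real.sin n))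
        atTop (nhds L) := by
  constructor
  · intro Ω _ μ _ c hc1 hc2 X Y₁ Y₂ hX hY₁ hY₂ huX huY₁ huY₂ hind
    exact part1 μ c hc1 hc2 X Y₁ Y₂ hX hY₁ hY₂ huX huY₁ huY₂ hind
  · exact part2
end
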